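/- arXiv:cs/0009006 — 3 statements merged into one kernel-verified Lean document; each statement's English description precedes it below -/
import Mathlib

section
/- There exists ε ∈ (0, 1) such that λ(3−ε, 4−ε, 4−ε) = λ(1+ε, 4), and for this ε both are equal to λ(4,4,5,5). Moreover ε ≈ 0.095543, i.e., ε ∈ (0.0955, 0.0956). -/
/-- There is `ε ∈ (0,1)`, in fact `ε ∈ (0.0955, 0.0956)`, for which the work factors
`λ(3−ε, 4−ε, 4−ε)` and `λ(1+ε, 4)` coincide and are both equal to `λ(4,4,5,5)`:
i.e. there is a common root `lam > 1` of all three defining equations. -/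
theorem optimal_epsilon :
    ∃ ε : ℝ, 0 < ε ∧ ε < 1 ∧ 0.0955 < ε ∧ ε < 0.0956 ∧
      ∃ lam : ℝ, 1 < lam ∧
        lam ^ (-(3 - ε)) + lam ^ (-(4 - ε)) + lam ^ (-(4 - ε)) = 1 ∧
        lam ^ (-(1 + ε)) + lam ^ (-(4 : ℝ)) = 1 ∧
        2 / lam ^ 4 + 2 / lam ^ 5 = 1 := by
  -- obtain the root lam of x^5 - 2x - 2 in [1.3644301, 1.3644302]
  obtain ⟨lam, hmem, hroot⟩ :
      ∃ lam ∈ Set.Icc (1.3644301 : ℝ) 1.3644302, lam ^ 5 - 2 * lam - 2 = 0 := by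
    have hc : ContinuousOn (fun x : ℝ => x ^ 5 - 2 * x - 2)
        (Set.Icc (1.3644301 : ℝ) 1.3644302) := by fun_prop
    have hiv := intermediate_value_Icc (by norm_num : (1.3644301:ℝ) ≤ 1.3644302) hc
    have h0 : (0:ℝ) ∈ Set.Icc ((1.3644301:ℝ) ^ 5 - 2 * 1.3644301 - 2)
        ((1.3644302:ℝ) ^ 5 - 2 * 1.3644302 - 2) := by
      constructor <;> norm_num
    obtain ⟨l, hm, he⟩ := hiv h0
    exact ⟨l, hm, he⟩
  obtain ⟨ha, hb⟩ := hmem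
  have h5 : lam ^ 5 = 2 * lam + 2 := by linarith
  have hl1 : 1 < lam := by linarith [ha]
  have hlp : (0:ℝ) < lam := by linarith
  have hl2 : (0:ℝ) < lam + 2 := by linarith
  have ht : (0:ℝ) < lam ^ 4 / (lam + 2) := by positivity
  set ε := Real.logb lam (lam ^ 4 / (lam + 2)) with hε
  have hpow : lam ^ ε = lam ^ 4 / (lam + 2) := Real.rpow_logb hlp hl1.ne' ht
  -- lower bound : lam ^ (15/157) < lam^4/(lam+2)
  have hlow : lam ^ ((15:ℝ)/157) < lam ^ 4 / (lam + 2) := by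
    have hkey : lam ^ (15:ℕ) < (lam ^ 4 / (lam + 2)) ^ (157:ℕ) := by
      rw [div_pow, lt_div_iff₀ (by positivity)]
      have c1 : lam ^ 15 * (lam + 2) ^ 157 ≤
          (1.3644302:ℝ) ^ 15 * (1.3644302 + 2) ^ 157 := by gcongr <;> linarith
      have c2 : ((1.3644302:ℝ)) ^ 15 * (1.3644302 + 2) ^ 157 < (1.3644301:ℝ) ^ 628 := by
        rw [show (628:ℕ) = 157 * 4 from rfl, pow_mul]
        norm_num
      have c3 : ((1.3644301:ℝ)) ^ 628 ≤ lam ^ 628 := by gcongr <;> linarith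
      calc lam ^ 15 * (lam + 2) ^ 157 ≤ (1.3644302:ℝ) ^ 15 * (1.3644302 + 2) ^ 157 := c1
        _ < (1.3644301:ℝ) ^ 628 := c2
        _ ≤ lam ^ 628 := c3
        _ = (lam ^ 4) ^ 157 := by rw [show (628:ℕ) = 4 * 157 from rfl, pow_mul]
    have h1 : (lam ^ ((15:ℝ)/157)) ^ (157:ℕ) = lam ^ (15:ℕ) := by
      rw [← Real.rpow_natCast (lam ^ ((15:ℝ)/157)) 157, ← Real.rpow_mul hlp.le,
        ← Real.rpow_natCast lam 15]
      norm_num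
    refine lt_of_pow_lt_pow_left₀ 157 ht.le ?_
    rw [h1]; exact hkey
  -- upper bound : lam^4/(lam+2) < lam ^ (13/136)
  have hhigh : lam ^ 4 / (lam + 2) < lam ^ ((13:ℝ)/136) := by
    have hkey : (lam ^ 4 / (lam + 2)) ^ (136:ℕ) < lam ^ (13:ℕ) := by
      rw [div_pow, div_lt_iff₀ (by positivity)]
      have c1 : lam ^ 544 ≤ (1.3644302:ℝ) ^ 544 := by gcongr <;> linarith
      have c2 : ((1.3644302:ℝ)) ^ 544 < (1.3644301:ℝ) ^ 13 * (1.3644301 + 2) ^ 136 := by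
        rw [show (544:ℕ) = 136 * 4 from rfl, pow_mul]
        norm_num
      have c3 : (1.3644301:ℝ) ^ 13 * (1.3644301 + 2) ^ 136 ≤ lam ^ 13 * (lam + 2) ^ 136 := by
        gcongr <;> linarith
      calc (lam ^ 4) ^ 136 = lam ^ 544 := by rw [show (544:ℕ) = 4 * 136 from rfl, pow_mul]
        _ ≤ (1.3644302:ℝ) ^ 544 := c1
        _ < (1.3644301:ℝ) ^ 13 * (1.3644301 + 2) ^ 136 := c2
        _ ≤ lam ^ 13 * (lam + 2) ^ 136 := c3
    have h1 : (lam ^ ((13:ℝ)/136)) ^ (136:ℕ) = lam ^ (13:ℕ) := by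
      rw [← Real.rpow_natCast (lam ^ ((13:ℝ)/136)) 136, ← Real.rpow_mul hlp.le,
        ← Real.rpow_natCast lam 13]
      norm_num
    refine lt_of_pow_lt_pow_left₀ 136 (Real.rpow_pos_of_pos hlp _).le ?_
    rw [h1]; exact hkey
  have hεlow : (15:ℝ)/157 < ε := by
    have := Real.logb_lt_logb hl1 (Real.rpow_pos_of_pos hlp _) hlow
    rwa [Real.logb_rpow hlp hl1.ne'] at this
  have hεhigh : ε < (13:ℝ)/136 := by
    have := Real.logb_lt_logb hl1 ht hhigh
    rwa [Real.logb_rpow hlp hl1.ne'] at this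
  refine ⟨ε, by linarith [hεlow], by linarith [hεhigh], by linarith [hεlow],
    by linarith [hεhigh], lam, hl1, ?_, ?_, ?_⟩
  · have e1 : lam ^ (-(3 - ε)) = lam ^ ε / lam ^ (3:ℕ) := by
      rw [show -(3 - ε) = ε - ((3:ℕ):ℝ) by push_cast; ring, Real.rpow_sub hlp,
        Real.rpow_natCast]
    have e2 : lam ^ (-(4 - ε)) = lam ^ ε / lam ^ (4:ℕ) := by
      rw [show -(4 - ε) = ε - ((4:ℕ):ℝ) by push_cast; ring, Real.rpow_sub hlp,
        Real.rpow_natCast]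
    rw [e1, e2, hpow]
    field_simp
    ring
  · have e4 : lam ^ (-(1 + ε)) = (lam * lam ^ ε)⁻¹ := by
      rw [Real.rpow_neg hlp.le, Real.rpow_add hlp, Real.rpow_one]
    have e5 : lam ^ (-(4:ℝ)) = (lam ^ (4:ℕ))⁻¹ := by
      rw [show -(4:ℝ) = -((4:ℕ):ℝ) by push_cast; ring, Real.rpow_neg hlp.le,
        Real.rpow_natCast]
    rw [e4, e5, hpow]
    have h5' : lam ^ 5 ≠ 0 := by positivity
    rw [show (1:ℝ) = (2 * lam + 2) / lam ^ 5 by rw [← h5, div_self h5']]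
    field_simp
    ring
  · have h5' : lam ^ 5 ≠ 0 := by positivity
    rw [show (1:ℝ) = (2 * lam + 2) / lam ^ 5 by rw [← h5, div_self h5']]
    field_simp
end

section
/- A graph G is 3-vertex-colorable if and only if there is a maximal independent set S of G such that G − S is bipartite. -/
/-- `S` is an independent set of `G`. -/
def IndepSet {V : Type*} (G : SimpleGraph V) (S : Set V) : Prop :=
  ∀ u ∈ S, ∀ v ∈ S, ¬ G.Adj u v

/-- `S` is a maximal independent set of `G`. -/
def MaximalIndepSet {V : Type*} (G : SimpleGraph V) (S : Set V) : Prop :=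
  IndepSet G S ∧ ∀ T : Set V, IndepSet G T → S ⊆ T → S = T

lemma exists_maximal_indep_supset {V : Type*} (G : SimpleGraph V) (S0 : Set V)
    (h0 : IndepSet G S0) : ∃ S, S0 ⊆ S ∧ MaximalIndepSet G S := by
  obtain ⟨m, hm, hmax⟩ := zorn_subset_nonempty {T | IndepSet G T}
    (fun c hc hchain hne => by
      refine ⟨⋃₀ c, ?_, fun s hs => Set.subset_sUnion_of_mem hs⟩
      intro u hu v hv hadj
      obtain ⟨a, ha, hua⟩ := hu
      obtain ⟨b, hb, hvb⟩ := hv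
      rcases hchain.total ha hb with h | h
      · exact hc hb u (h hua) v hvb hadj
      · exact hc ha u hua v (h hvb) hadj) S0 h0
  exact ⟨m, hm, hmax.1, fun T hT hmT => hmT.antisymm (hmax.2 hT hmT)⟩

/-- Lawler's observation: a graph is 3-vertex-colorable iff some maximal
independent set `S` has bipartite complement `G − S`. -/
theorem three_colorable_iff_maximal_indep_bipartite {V : Type*}
    (G : SimpleGraph V) :
    G.Colorable 3 ↔
      ∃ S : Set V, MaximalIndepSet G S ∧ (G.induce Sᶜ).Colorable 2 := by
  constructor
  · rintro ⟨c⟩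
    have h0 : IndepSet G (c ⁻¹' {0}) := fun u hu v hv hadj =>
      c.valid hadj (hu.trans hv.symm)
    obtain ⟨S, hS0, hS⟩ := exists_maximal_indep_supset G _ h0
    refine ⟨S, hS, ?_⟩
    refine ⟨⟨fun v => if c v.1 = 1 then 0 else 1, ?_⟩⟩
    rintro ⟨u, hu⟩ ⟨v, hv⟩ hadj
    have hadj' : G.Adj u v := hadj
    have hne : c u ≠ c v := c.valid hadj'
    have hu0 : c u ≠ 0 := fun h => hu (hS0 h)
    have hv0 : c v ≠ 0 := fun h => hv (hS0 h)
    simp only [SimpleGraph.Coloring.mk]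
    intro h
    apply hne
    split_ifs at h with h1 h2
    · exact h1.trans h2.symm
    · exact absurd h (by norm_num)
    · exact absurd h (by norm_num)
    · fin_omega
  · rintro ⟨S, ⟨hind, _⟩, ⟨c2⟩⟩
    classical
    refine ⟨⟨fun v => if h : v ∈ S then 2 else Fin.castSucc (c2 ⟨v, h⟩), ?_⟩⟩
    intro u v hadj
    simp only [SimpleGraph.top_adj]
    by_cases hu : u ∈ S <;> by_cases hv : v ∈ S
    · exact absurd hadj (hind u hu v hv)
    · simp only [dif_pos hu, dif_neg hv]
      intro h
      have h' := congrArg Fin.val h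
      simp only [Fin.coe_castSucc] at h'
      have := (c2 ⟨v, hv⟩).isLt
      have h2 : ((2 : Fin 3) : ℕ) = 2 := rfl
      rw [h2] at h'
      omega
    · simp only [dif_neg hu, dif_pos hv]
      intro h
      have h' := congrArg Fin.val h
      simp only [Fin.coe_castSucc] at h'
      have := (c2 ⟨u, hu⟩).isLt
      have h2 : ((2 : Fin 3) : ℕ) = 2 := rfl
      rw [h2] at h'
      omega
    · simp only [dif_neg hu, dif_neg hv]
      intro h
      exact c2.valid (by exact hadj : (G.induce Sᶜ).Adj ⟨u, hu⟩ ⟨v, hv⟩)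
        (Fin.castSucc_injective _ h)
end

section
/- Subject to the constraints p,q,r,s,t ≥ 0, p+q+r+s+t = n, 4p+2q ≤ r, s ≤ 2r, and s+t ≤ 20r/3, the function 3^p · 2^q · Λ^s · (3Λ^3)^{t/7}, where Λ = λ(4,4,5,5) ≈ 1.36443, is maximized at p = 0, r = 2q, s = 2r, t = 14r/3, giving value (2^{3/49} · 3^{4/49} · Λ^{24/49})^n ≈ 1.3289^n. In particular the maximum is at most 1.3289^n. -/
open Real

/-- The optimization concluding the 3-coloring bound.  Let `Λ = λ(4,4,5,5)` (the
root in `(1,∞)` of `1 = 2x⁻⁴ + 2x⁻⁵`, so `1.3644 < Λ < 1.3645`).  Subject to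
`p,q,r,s,t ≥ 0`, `p+q+r+s+t = n`, `4p+2q ≤ r`, `s ≤ 2r`, `s+t ≤ 20r/3`, the
quantity `3^p·2^q·Λ^s·(3Λ³)^(t/7)` is at most
`(2^(3/49)·3^(4/49)·Λ^(24/49))^n ≤ 1.3289^n`, and this bound is attained at
`p = 0`, `r = 2q`, `s = 2r`, `t = 14r/3`. -/
theorem coloring_lp_bound (Λ : ℝ) (hΛ1 : 1 < Λ)
    (hΛroot : 2 / Λ ^ 4 + 2 / Λ ^ 5 = 1) (n : ℝ) (hn : 0 ≤ n) :
    (∀ p q r s t : ℝ, 0 ≤ p → 0 ≤ q → 0 ≤ r → 0 ≤ s → 0 ≤ t →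
      p + q + r + s + t = n → 4 * p + 2 * q ≤ r → s ≤ 2 * r →
      s + t ≤ 20 * r / 3 →
      (3 : ℝ) ^ p * 2 ^ q * Λ ^ s * (3 * Λ ^ 3) ^ (t / 7) ≤
        ((2 : ℝ) ^ ((3 : ℝ) / 49) * 3 ^ ((4 : ℝ) / 49) *
          Λ ^ ((24 : ℝ) / 49)) ^ n) ∧
    (∃ p q r s t : ℝ, 0 ≤ p ∧ 0 ≤ q ∧ 0 ≤ r ∧ 0 ≤ s ∧ 0 ≤ t ∧
      p + q + r + s + t = n ∧ 4 * p + 2 * q ≤ r ∧ s ≤ 2 * r ∧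
      s + t ≤ 20 * r / 3 ∧ p = 0 ∧ r = 2 * q ∧ s = 2 * r ∧ t = 14 * r / 3 ∧
      (3 : ℝ) ^ p * 2 ^ q * Λ ^ s * (3 * Λ ^ 3) ^ (t / 7) =
        ((2 : ℝ) ^ ((3 : ℝ) / 49) * 3 ^ ((4 : ℝ) / 49) *
          Λ ^ ((24 : ℝ) / 49)) ^ n) ∧
    ((2 : ℝ) ^ ((3 : ℝ) / 49) * 3 ^ ((4 : ℝ) / 49) * Λ ^ ((24 : ℝ) / 49)) ^ n ≤
      (1.3289 : ℝ) ^ n := by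
  have h0 : (0:ℝ) < Λ := by linarith
  -- bounds on Λ from the root equation
  have hroot : Λ ^ 5 = 2 * Λ + 2 := by
    field_simp at hΛroot
    nlinarith [pow_pos h0 4, pow_pos h0 5]
  have hlb : (1.3644:ℝ) < Λ := by
    nlinarith [pow_pos h0 2, pow_pos h0 3, sq_nonneg (Λ - 1.3644),
      sq_nonneg (Λ^2 - 1.3644^2), sq_nonneg (Λ^2 + Λ)]
  have hub : Λ < 1.3645 := by
    nlinarith [pow_pos h0 2, pow_pos h0 3, sq_nonneg (Λ - 1.3645),
      sq_nonneg (Λ^2 - 1.3645^2), sq_nonneg (Λ^2 + Λ)]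
  have hp24 : Λ ^ 24 ≤ (1.3645:ℝ) ^ 24 := pow_le_pow_left₀ h0.le hub.le 24
  -- key logarithmic inequalities
  have f1 : Real.log 3 ≤ 4 * Real.log Λ := by
    have h4 : (3:ℝ) ≤ Λ ^ 4 := by
      nlinarith [sq_nonneg (Λ^2 - 1.3644^2), sq_nonneg (Λ - 1.3644)]
    calc Real.log 3 ≤ Real.log (Λ ^ 4) := Real.log_le_log (by norm_num) h4
      _ = 4 * Real.log Λ := by rw [Real.log_pow]; push_cast; ring
  have f2 : Real.log 2 + Real.log Λ ≤ Real.log 3 := by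
    have h2 : (2:ℝ) * Λ ≤ 3 := by nlinarith
    calc Real.log 2 + Real.log Λ = Real.log (2 * Λ) :=
          (Real.log_mul (by norm_num) h0.ne').symm
      _ ≤ Real.log 3 := Real.log_le_log (by positivity) h2
  have f3 : 53 * Real.log 3 + 24 * Real.log Λ ≤ 95 * Real.log 2 := by
    have h3 : (3:ℝ)^53 * Λ ^ 24 ≤ 2 ^ 95 := by
      calc (3:ℝ)^53 * Λ ^ 24 ≤ 3^53 * (1.3645:ℝ)^24 :=
            mul_le_mul_of_nonneg_left hp24 (by positivity)
        _ ≤ 2 ^ 95 := by norm_num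
    have := Real.log_le_log (by positivity) h3
    rw [Real.log_mul (by positivity) (by positivity), Real.log_pow, Real.log_pow,
      Real.log_pow] at this
    push_cast at this
    linarith [this]
  have f4 : Real.log 2 ≤ Real.log 3 := Real.log_le_log (by norm_num) (by norm_num)
  have f5 : 3 * Real.log 2 + 4 * Real.log 3 + 24 * Real.log Λ ≤
      49 * Real.log 1.3289 := by
    have h3 : (2:ℝ)^3 * 3^4 * Λ ^ 24 ≤ (1.3289:ℝ) ^ 49 := by
      calc (2:ℝ)^3 * 3^4 * Λ ^ 24 ≤ 2^3 * 3^4 * (1.3645:ℝ)^24 :=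
            mul_le_mul_of_nonneg_left hp24 (by positivity)
        _ ≤ (1.3289:ℝ) ^ 49 := by norm_num
    have := Real.log_le_log (by positivity) h3
    rw [Real.log_mul (by positivity) (by positivity),
      Real.log_mul (by positivity) (by positivity),
      Real.log_pow, Real.log_pow, Real.log_pow, Real.log_pow] at this
    push_cast at this
    linarith [this]
  set l2 := Real.log 2 with hl2
  set l3 := Real.log 3 with hl3
  set lL := Real.log Λ with hlL
  -- the base B
  set B : ℝ := (2 : ℝ) ^ ((3 : ℝ) / 49) * 3 ^ ((4 : ℝ) / 49) * Λ ^ ((24 : ℝ) / 49)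
    with hB
  have hBpos : 0 < B := by
    rw [hB]; positivity
  have hlogB : Real.log B = (3 * l2 + 4 * l3 + 24 * lL) / 49 := by
    rw [hB, Real.log_mul (by positivity) (by positivity),
      Real.log_mul (by positivity) (by positivity),
      Real.log_rpow (by norm_num), Real.log_rpow (by norm_num), Real.log_rpow h0]
    ring
  -- objective rewritten via exp
  have hobj : ∀ p q s t : ℝ,
      (3 : ℝ) ^ p * 2 ^ q * Λ ^ s * (3 * Λ ^ 3) ^ (t / 7) =
        Real.exp (l3 * p + l2 * q + lL * s + (l3 + 3 * lL) * (t / 7)) := by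
    intro p q s t
    have h3L : Real.log (3 * Λ ^ 3) = l3 + 3 * lL := by
      rw [Real.log_mul (by norm_num) (by positivity), Real.log_pow]
      push_cast; ring
    rw [Real.rpow_def_of_pos (by norm_num : (0:ℝ) < 3),
      Real.rpow_def_of_pos (by norm_num : (0:ℝ) < 2),
      Real.rpow_def_of_pos h0,
      Real.rpow_def_of_pos (by positivity : (0:ℝ) < 3 * Λ ^ 3), h3L,
      ← Real.exp_add, ← Real.exp_add, ← Real.exp_add]
  have hBn : B ^ n = Real.exp (((3 * l2 + 4 * l3 + 24 * lL) / 49) * n) := by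
    rw [Real.rpow_def_of_pos hBpos, hlogB]
  refine ⟨?_, ?_, ?_⟩
  · intro p q r s t hp hq hr hs ht hsum hc1 hc2 hc3
    rw [hobj, hBn, Real.exp_le_exp, ← hsum]
    nlinarith [mul_nonneg (show (0:ℝ) ≤ 95 * l2 - 53 * l3 - 24 * lL by linarith) hp,
      mul_nonneg (show (0:ℝ) ≤ 46 * l2 - 4 * l3 - 24 * lL by linarith)
        (show (0:ℝ) ≤ r - 4 * p - 2 * q by linarith),
      mul_nonneg (show (0:ℝ) ≤ 4 * lL - l3 by linarith)
        (show (0:ℝ) ≤ 2 * r - s by linarith),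
      mul_nonneg (show (0:ℝ) ≤ l3 - l2 - lL by linarith)
        (show (0:ℝ) ≤ 20 * r / 3 - s - t by linarith)]
  · refine ⟨0, 3 * n / 49, 6 * n / 49, 12 * n / 49, 28 * n / 49,
      le_refl 0, by positivity, by positivity, by positivity, by positivity,
      by ring, by linarith [hn], by linarith [hn], by linarith [hn],
      rfl, by ring, by ring, by ring, ?_⟩
    rw [hobj, hBn]
    congr 1
    ring
  · have hBle : B ≤ 1.3289 := by
      have : Real.log B ≤ Real.log 1.3289 := by rw [hlogB]; linarith
      calc B = Real.exp (Real.log B) := (Real.exp_log hBpos).symm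
        _ ≤ Real.exp (Real.log 1.3289) := Real.exp_le_exp.mpr this
        _ = 1.3289 := Real.exp_log (by norm_num)
    exact Real.rpow_le_rpow hBpos.le hBle hn
end
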